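/- There is an absolute constant C > 0 with the following property. Let h be a natural number and let P = P₀ \ ⋃_{i=1}^h interior(Pᵢ), where P₀ is a convex polygon in ℝ² and each hole Pᵢ is a closed axis-aligned rectangle with nonempty interior, the rectangles being pairwise disjoint and contained in the interior of P₀. Then the geodesic diameter satisfies diam_g(P) ≤ C·diam₂(P), i.e., the distortion ϱ(P) = diam_g(P)/diam₂(P) is O(1), independent of h. -/

import Mathlib

open Set Metric ENNReal RealInnerProductSpace

noncomputable section

/-- The Euclidean plane. -/
abbrev Plane := EuclideanSpace ℝ (Fin 2)

/-- A convex polygon: the convex hull of a nonempty finite point set. -/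
def IsConvexPolygon (Q : Set Plane) : Prop :=
  ∃ S : Finset Plane, S.Nonempty ∧ Q = convexHull ℝ (S : Set Plane)

/-- `γ` is a continuous path from `s` to `t` (parametrized on `[0,1]`) with image in `P`. -/
def IsPathIn (P : Set Plane) (γ : ℝ → Plane) (s t : Plane) : Prop :=
  ContinuousOn γ (Set.Icc 0 1) ∧ γ 0 = s ∧ γ 1 = t ∧ Set.MapsTo γ (Set.Icc 0 1) P

/-- Length of a path: its total variation on `[0,1]`. -/
def pathLen (γ : ℝ → Plane) : ℝ≥0∞ := eVariationOn γ (Set.Icc 0 1)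

/-- Geodesic distance inside `P`: infimum of lengths of continuous paths
from `s` to `t` contained in `P`. -/
def geod (P : Set Plane) (s t : Plane) : ℝ≥0∞ :=
  ⨅ γ : {γ : ℝ → Plane // IsPathIn P γ s t}, pathLen γ.1

/-- Geodesic diameter of `P`. -/
def geodDiam (P : Set Plane) : ℝ≥0∞ :=
  ⨆ s ∈ P, ⨆ t ∈ P, geod P s t

/-- The width of a planar set: the minimum, over unit directions `v`,
of the extent of `C` in direction `v`. -/
def setWidth (C : Set Plane) : ℝ :=
  ⨅ v : {v : Plane // ‖v‖ = 1},
    (sSup ((fun x => ⟪x, v.1⟫) '' C) - sInf ((fun x => ⟪x, v.1⟫) '' C))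

namespace AAGD

/-- coordinates are 1-Lipschitz -/
lemma coord_abs_le_dist (p q : Plane) (i : Fin 2) : |p i - q i| ≤ dist p q := by
  rw [EuclideanSpace.dist_eq, ← Real.sqrt_sq_eq_abs]
  apply Real.sqrt_le_sqrt
  have : (p i - q i) ^ 2 = dist (p i) (q i) ^ 2 := by
    rw [Real.dist_eq, sq_abs]
  rw [this]
  exact Finset.single_le_sum (f := fun j => dist (p j) (q j) ^ 2)
    (fun j _ => by positivity) (Finset.mem_univ i)

lemma dist_le_coords (p q : Plane) : dist p q ≤ |p 0 - q 0| + |p 1 - q 1| := by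
  rw [EuclideanSpace.dist_eq]
  rw [show (Finset.univ : Finset (Fin 2)) = {0, 1} by decide]
  rw [Finset.sum_insert (by decide), Finset.sum_singleton]
  have h0 : dist (p 0) (q 0) = |p 0 - q 0| := Real.dist_eq _ _
  have h1 : dist (p 1) (q 1) = |p 1 - q 1| := Real.dist_eq _ _
  rw [h0, h1]
  have hle : |p 0 - q 0| ^ 2 + |p 1 - q 1| ^ 2 ≤ (|p 0 - q 0| + |p 1 - q 1|) ^ 2 := by
    nlinarith [abs_nonneg (p 0 - q 0), abs_nonneg (p 1 - q 1)]
  calc Real.sqrt (|p 0 - q 0| ^ 2 + |p 1 - q 1| ^ 2)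
      ≤ Real.sqrt ((|p 0 - q 0| + |p 1 - q 1|) ^ 2) := Real.sqrt_le_sqrt hle
    _ = |p 0 - q 0| + |p 1 - q 1| := Real.sqrt_sq (by positivity)

def pt (x y : ℝ) : Plane := !₂[x, y]

@[simp] lemma pt_zero (x y : ℝ) : pt x y 0 = x := rfl
@[simp] lemma pt_one (x y : ℝ) : pt x y 1 = y := rfl

lemma pt_eta (p : Plane) : pt (p 0) (p 1) = p := by
  ext i
  fin_cases i <;> rfl

lemma combo_apply (r s : ℝ) (p q : Plane) (i : Fin 2) :
    (r • p + s • q) i = r * p i + s * q i := rfl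

lemma dist_pt_vert (x y₁ y₂ : ℝ) : dist (pt x y₁) (pt x y₂) = |y₁ - y₂| := by
  rw [EuclideanSpace.dist_eq]
  rw [show (Finset.univ : Finset (Fin 2)) = {0, 1} by decide]
  rw [Finset.sum_insert (by decide), Finset.sum_singleton]
  simp [Real.dist_eq, Real.sqrt_sq_eq_abs]

lemma dist_pt_horiz (x₁ x₂ y : ℝ) : dist (pt x₁ y) (pt x₂ y) = |x₁ - x₂| := by
  rw [EuclideanSpace.dist_eq]
  rw [show (Finset.univ : Finset (Fin 2)) = {0, 1} by decide]
  rw [Finset.sum_insert (by decide), Finset.sum_singleton]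
  simp [Real.dist_eq, Real.sqrt_sq_eq_abs]

end AAGD
namespace AAGD
lemma isLinearMap_coord (i : Fin 2) : IsLinearMap ℝ (fun p : Plane => p i) :=
  ⟨fun _ _ => rfl, fun _ _ => rfl⟩
end AAGD
namespace AAGD

/-- `Good P s t L`: there is a continuous path from `s` to `t` inside `P` of length `≤ L`. -/
def Good (P : Set Plane) (s t : Plane) (L : ℝ) : Prop :=
  0 ≤ L ∧ ∃ γ : ℝ → Plane, Continuous γ ∧ γ 0 = s ∧ γ 1 = t ∧
    Set.MapsTo γ (Set.Icc 0 1) P ∧ pathLen γ ≤ ENNReal.ofReal L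

lemma Good.mono {P s t L L'} (h : Good P s t L) (hL : L ≤ L') : Good P s t L' := by
  obtain ⟨h0, γ, hc, hg0, hg1, hm, hlen⟩ := h
  exact ⟨h0.trans hL, γ, hc, hg0, hg1, hm, hlen.trans (ENNReal.ofReal_le_ofReal hL)⟩

def sg (z w : Plane) : ℝ → Plane := fun u => (1 - u) • z + u • w

lemma sg_cont (z w : Plane) : Continuous (sg z w) := by
  unfold sg
  exact ((continuous_const.sub continuous_id).smul continuous_const).add
    (continuous_id.smul continuous_const)

lemma sg_lipschitz (z w : Plane) (u v : ℝ) :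
    dist (sg z w u) (sg z w v) = |u - v| * dist z w := by
  unfold sg
  rw [dist_eq_norm, dist_eq_norm]
  have : (1 - u) • z + u • w - ((1 - v) • z + v • w) = (u - v) • (w - z) := by
    module
  rw [this, norm_smul, Real.norm_eq_abs, norm_sub_rev]

lemma eVariationOn_id_Icc : eVariationOn (id : ℝ → ℝ) (Set.Icc 0 1) ≤ ENNReal.ofReal 1 := by
  have h := MonotoneOn.eVariationOn_le (f := (id : ℝ → ℝ)) (s := Set.Icc (0:ℝ) 1)
    (monotoneOn_id) (a := 0) (b := 1) (by simp) (by simp)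
  simpa using h

lemma sg_pathLen (z w : Plane) : pathLen (sg z w) ≤ ENNReal.ofReal (dist z w) := by
  have hlip : LipschitzWith (‖w - z‖₊) (sg z w) := by
    intro u v
    rw [edist_dist, edist_dist, sg_lipschitz]
    rw [← ENNReal.ofReal_coe_nnreal]
    rw [← ENNReal.ofReal_mul (by positivity)]
    apply ENNReal.ofReal_le_ofReal
    rw [Real.dist_eq, coe_nnnorm, dist_eq_norm, norm_sub_rev, mul_comm]
  have : pathLen (sg z w) = eVariationOn ((sg z w) ∘ (id : ℝ → ℝ)) (Set.Icc 0 1) := rfl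
  rw [pathLen]
  calc eVariationOn (sg z w) (Set.Icc 0 1)
      = eVariationOn ((sg z w) ∘ (id : ℝ → ℝ)) (Set.Icc 0 1) := rfl
    _ ≤ (‖w - z‖₊ : ℝ≥0∞) * eVariationOn (id : ℝ → ℝ) (Set.Icc 0 1) :=
        LipschitzOnWith.comp_eVariationOn_le (hlip.lipschitzOnWith)
          (Set.mapsTo_id _)
    _ ≤ (‖w - z‖₊ : ℝ≥0∞) * ENNReal.ofReal 1 := by
        exact mul_le_mul_right eVariationOn_id_Icc _
    _ = ENNReal.ofReal (dist z w) := by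
        rw [ENNReal.ofReal_one, mul_one, dist_eq_norm, norm_sub_rev]
        exact (ofReal_norm _).symm

lemma Good.of_seg {P : Set Plane} {s t : Plane}
    (h : ∀ u : ℝ, u ∈ Set.Icc (0:ℝ) 1 → (1 - u) • s + u • t ∈ P) :
    Good P s t (dist s t) := by
  refine ⟨dist_nonneg, sg s t, sg_cont s t, by simp [sg], by simp [sg], ?_, sg_pathLen s t⟩
  intro u hu
  exact h u hu

def pcat (γ₁ γ₂ : ℝ → Plane) : ℝ → Plane :=
  fun t => if t ≤ 1/2 then γ₁ (2*t) else γ₂ (2*t - 1)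

lemma image_double : (fun t : ℝ => 2*t) '' Set.Icc 0 (1/2) = Set.Icc 0 1 := by
  ext x
  simp only [Set.mem_image, Set.mem_Icc]
  constructor
  · rintro ⟨y, ⟨h1, h2⟩, rfl⟩; constructor <;> linarith
  · rintro ⟨h1, h2⟩; exact ⟨x/2, ⟨by linarith, by linarith⟩, by ring⟩

lemma image_double' : (fun t : ℝ => 2*t - 1) '' Set.Icc (1/2) 1 = Set.Icc 0 1 := by
  ext x
  simp only [Set.mem_image, Set.mem_Icc]
  constructor
  · rintro ⟨y, ⟨h1, h2⟩, rfl⟩; constructor <;> linarith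
  · rintro ⟨h1, h2⟩; exact ⟨(x+1)/2, ⟨by linarith, by linarith⟩, by ring⟩

lemma image_rev : (fun t : ℝ => 1 - t) '' Set.Icc 0 1 = Set.Icc 0 1 := by
  ext x
  simp only [Set.mem_image, Set.mem_Icc]
  constructor
  · rintro ⟨y, ⟨h1, h2⟩, rfl⟩; constructor <;> linarith
  · rintro ⟨h1, h2⟩; exact ⟨1 - x, ⟨by linarith, by linarith⟩, by ring⟩

lemma pcat_pathLen {γ₁ γ₂ : ℝ → Plane} (hb : γ₁ 1 = γ₂ 0) :
    pathLen (pcat γ₁ γ₂) ≤ pathLen γ₁ + pathLen γ₂ := by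
  have key := eVariationOn.Icc_add_Icc (pcat γ₁ γ₂) (s := Set.univ) (a := (0:ℝ)) (b := 1/2)
    (c := 1) (by norm_num) (by norm_num) (Set.mem_univ _)
  simp only [Set.univ_inter] at key
  rw [pathLen, ← key]
  have e1 : eVariationOn (pcat γ₁ γ₂) (Set.Icc 0 (1/2)) ≤ pathLen γ₁ := by
    have heq : Set.EqOn (pcat γ₁ γ₂) (γ₁ ∘ (fun t : ℝ => 2*t)) (Set.Icc 0 (1/2)) := by
      intro x hx
      simp only [Set.mem_Icc] at hx
      simp only [pcat, Function.comp_apply, if_pos hx.2]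
    rw [eVariationOn.eq_of_eqOn heq,
      eVariationOn.comp_eq_of_monotoneOn γ₁ _
        (fun x _ y _ hxy => mul_le_mul_of_nonneg_left hxy two_pos.le),
      image_double]
    exact le_rfl
  have e2 : eVariationOn (pcat γ₁ γ₂) (Set.Icc (1/2) 1) ≤ pathLen γ₂ := by
    have heq : Set.EqOn (pcat γ₁ γ₂) (γ₂ ∘ (fun t : ℝ => 2*t - 1)) (Set.Icc (1/2) 1) := by
      intro x hx
      simp only [Set.mem_Icc] at hx
      by_cases hx2 : x ≤ 1/2
      · have : x = 1/2 := le_antisymm hx2 hx.1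
        subst this
        simp only [pcat, Function.comp_apply, if_pos le_rfl]
        norm_num [hb]
      · simp only [pcat, Function.comp_apply, if_neg hx2]
    rw [eVariationOn.eq_of_eqOn heq,
      eVariationOn.comp_eq_of_monotoneOn γ₂ _
        (fun x _ y _ hxy => sub_le_sub_right (mul_le_mul_of_nonneg_left hxy two_pos.le) 1),
      image_double']
    exact le_rfl
  exact add_le_add e1 e2

lemma Good.trans {P s t r L₁ L₂} (h₁ : Good P s t L₁) (h₂ : Good P t r L₂) :
    Good P s r (L₁ + L₂) := by
  obtain ⟨h01, γ₁, hc1, ha1, hb1, hm1, hl1⟩ := h₁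
  obtain ⟨h02, γ₂, hc2, ha2, hb2, hm2, hl2⟩ := h₂
  have hb : γ₁ 1 = γ₂ 0 := by rw [hb1, ha2]
  refine ⟨by linarith, pcat γ₁ γ₂, ?_, ?_, ?_, ?_, ?_⟩
  · apply Continuous.if_le (hc1.comp (by continuity)) (hc2.comp (by continuity))
      continuous_id continuous_const
    intro x hx
    simp only [id] at hx
    simp only [Function.comp_apply]
    rw [hx]
    norm_num [hb]
  · simp only [pcat]
    norm_num [ha1]
  · simp only [pcat]
    norm_num [hb2]
  · intro u hu
    simp only [Set.mem_Icc] at hu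
    by_cases h : u ≤ 1/2
    · simp only [pcat, if_pos h]
      exact hm1 ⟨by linarith, by linarith⟩
    · simp only [pcat, if_neg h]
      push_neg at h
      exact hm2 ⟨by linarith, by linarith⟩
  · calc pathLen (pcat γ₁ γ₂) ≤ pathLen γ₁ + pathLen γ₂ := pcat_pathLen hb
      _ ≤ ENNReal.ofReal L₁ + ENNReal.ofReal L₂ := add_le_add hl1 hl2
      _ = ENNReal.ofReal (L₁ + L₂) := (ENNReal.ofReal_add h01 h02).symm

lemma Good.symm {P s t L} (h : Good P s t L) : Good P t s L := by
  obtain ⟨h0, γ, hc, ha, hb, hm, hl⟩ := h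
  refine ⟨h0, γ ∘ (fun u : ℝ => 1 - u), hc.comp (by continuity), by simp [ha, hb], by simp [ha], ?_, ?_⟩
  · intro u hu
    simp only [Set.mem_Icc] at hu
    exact hm ⟨by simp; linarith [hu.1, hu.2], by simp; linarith [hu.1, hu.2]⟩
  · rw [pathLen, eVariationOn.comp_eq_of_antitoneOn γ _
      (fun x _ y _ hxy => sub_le_sub_left hxy 1),
      image_rev]
    exact hl

lemma geod_le_of_good {P s t L} (h : Good P s t L) : geod P s t ≤ ENNReal.ofReal L := by
  obtain ⟨h0, γ, hc, ha, hb, hm, hl⟩ := h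
  have : geod P s t ≤ pathLen γ := by
    exact iInf_le (fun γ' : {γ : ℝ → Plane // IsPathIn P γ s t} => pathLen γ'.1)
      ⟨γ, hc.continuousOn, ha, hb, hm⟩
  exact this.trans hl

end AAGD
namespace AAGD

def hullS (S : Finset Plane) : Set Plane := convexHull ℝ (S : Set Plane)

lemma hull_convex (S : Finset Plane) : Convex ℝ (hullS S) := convex_convexHull ℝ _
lemma hull_compact (S : Finset Plane) : IsCompact (hullS S) := S.finite_toSet.isCompact_convexHull ℝ
lemma hull_closed (S : Finset Plane) : IsClosed (hullS S) := (hull_compact S).isClosed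

def xlo (S : Finset Plane) (hS : S.Nonempty) : ℝ := (S.image fun p : Plane => p 0).min' (hS.image _)
def xhi (S : Finset Plane) (hS : S.Nonempty) : ℝ := (S.image fun p : Plane => p 0).max' (hS.image _)
def ylo (S : Finset Plane) (hS : S.Nonempty) : ℝ := (S.image fun p : Plane => p 1).min' (hS.image _)
def yhi (S : Finset Plane) (hS : S.Nonempty) : ℝ := (S.image fun p : Plane => p 1).max' (hS.image _)

lemma mem_hull_bounds (S : Finset Plane) (hS : S.Nonempty) {p : Plane} (hp : p ∈ hullS S) :
    xlo S hS ≤ p 0 ∧ p 0 ≤ xhi S hS ∧ ylo S hS ≤ p 1 ∧ p 1 ≤ yhi S hS := by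
  have hsub : hullS S ⊆ ((fun q : Plane => q 0) ⁻¹' Set.Icc (xlo S hS) (xhi S hS)) ∩
      ((fun q : Plane => q 1) ⁻¹' Set.Icc (ylo S hS) (yhi S hS)) := by
    apply convexHull_min
    · intro q hq
      refine ⟨⟨?_, ?_⟩, ⟨?_, ?_⟩⟩
      · exact Finset.min'_le (S.image fun p : Plane => p 0) (q 0)
          (Finset.mem_image_of_mem _ hq)
      · exact Finset.le_max' (S.image fun p : Plane => p 0) (q 0)
          (Finset.mem_image_of_mem _ hq)
      · exact Finset.min'_le (S.image fun p : Plane => p 1) (q 1)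
          (Finset.mem_image_of_mem _ hq)
      · exact Finset.le_max' (S.image fun p : Plane => p 1) (q 1)
          (Finset.mem_image_of_mem _ hq)
    · exact ((convex_Icc _ _).is_linear_preimage (isLinearMap_coord 0)).inter
        ((convex_Icc _ _).is_linear_preimage (isLinearMap_coord 1))
  obtain ⟨⟨h1, h2⟩, ⟨h3, h4⟩⟩ := hsub hp
  exact ⟨h1, h2, h3, h4⟩

lemma exists_mem_x (S : Finset Plane) (hS : S.Nonempty) {x : ℝ}
    (hx : x ∈ Set.Icc (xlo S hS) (xhi S hS)) :
    ∃ p ∈ hullS S, p 0 = x := by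
  have himg : (fun p : Plane => p 0) '' hullS S
      = convexHull ℝ ((fun p : Plane => p 0) '' (S : Set Plane)) :=
    (isLinearMap_coord 0).image_convexHull _
  have hlo : xlo S hS ∈ (fun p : Plane => p 0) '' (S : Set Plane) := by
    have := (S.image fun p : Plane => p 0).min'_mem (hS.image _)
    rw [Finset.mem_image] at this
    obtain ⟨p, hp, hp'⟩ := this
    exact ⟨p, hp, hp'⟩
  have hhi : xhi S hS ∈ (fun p : Plane => p 0) '' (S : Set Plane) := by
    have := (S.image fun p : Plane => p 0).max'_mem (hS.image _)
    rw [Finset.mem_image] at this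
    obtain ⟨p, hp, hp'⟩ := this
    exact ⟨p, hp, hp'⟩
  have hseg : Set.Icc (xlo S hS) (xhi S hS) ⊆ convexHull ℝ ((fun p : Plane => p 0) '' ↑S) := by
    rw [← segment_eq_Icc (le_trans hx.1 hx.2)]
    exact (convex_convexHull ℝ _).segment_subset (subset_convexHull ℝ _ hlo)
      (subset_convexHull ℝ _ hhi)
  have : x ∈ (fun p : Plane => p 0) '' hullS S := by
    rw [himg]; exact hseg hx
  obtain ⟨p, hp, hp'⟩ := this
  exact ⟨p, hp, hp'⟩

/-- the upper envelope function of the hull -/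
def upperF (S : Finset Plane) (x : ℝ) : ℝ := sSup {y | pt x y ∈ hullS S}

lemma slice_closed (S : Finset Plane) (x : ℝ) : IsClosed {y | pt x y ∈ hullS S} := by
  have hlip : LipschitzWith 1 (fun y : ℝ => pt x y) := by
    apply LipschitzWith.of_dist_le_mul
    intro y₁ y₂
    rw [dist_pt_vert]
    simp [Real.dist_eq]
  exact (hull_closed S).preimage hlip.continuous

lemma slice_bddAbove (S : Finset Plane) (hS : S.Nonempty) (x : ℝ) :
    BddAbove {y | pt x y ∈ hullS S} := by
  refine ⟨yhi S hS, fun y hy => ?_⟩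
  have := (mem_hull_bounds S hS hy).2.2.2
  simpa using this

lemma slice_nonempty (S : Finset Plane) (hS : S.Nonempty) {x : ℝ}
    (hx : x ∈ Set.Icc (xlo S hS) (xhi S hS)) :
    ∃ y, pt x y ∈ hullS S := by
  obtain ⟨p, hp, hp'⟩ := exists_mem_x S hS hx
  refine ⟨p 1, ?_⟩
  rw [← hp', pt_eta]
  exact hp

lemma upperF_mem (S : Finset Plane) (hS : S.Nonempty) {x : ℝ}
    (hx : x ∈ Set.Icc (xlo S hS) (xhi S hS)) :
    pt x (upperF S x) ∈ hullS S := by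
  have hne : Set.Nonempty {y | pt x y ∈ hullS S} := slice_nonempty S hS hx
  have hcpt : IsCompact {y | pt x y ∈ hullS S} := by
    apply (isCompact_Icc (a := ylo S hS) (b := yhi S hS)).of_isClosed_subset (slice_closed S x)
    intro y hy
    have h := mem_hull_bounds S hS hy
    simp only [pt_one] at h
    exact ⟨h.2.2.1, h.2.2.2⟩
  exact hcpt.sSup_mem hne

lemma le_upperF (S : Finset Plane) (hS : S.Nonempty) {p : Plane} (hp : p ∈ hullS S) :
    p 1 ≤ upperF S (p 0) := by
  apply le_csSup (slice_bddAbove S hS (p 0))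
  rw [Set.mem_setOf_eq, pt_eta]
  exact hp

lemma upperF_le_yhi (S : Finset Plane) (hS : S.Nonempty) {x : ℝ}
    (hx : x ∈ Set.Icc (xlo S hS) (xhi S hS)) : upperF S x ≤ yhi S hS := by
  have := (mem_hull_bounds S hS (upperF_mem S hS hx)).2.2.2
  simpa using this

lemma ylo_le_upperF (S : Finset Plane) (hS : S.Nonempty) {x : ℝ}
    (hx : x ∈ Set.Icc (xlo S hS) (xhi S hS)) : ylo S hS ≤ upperF S x := by
  have := (mem_hull_bounds S hS (upperF_mem S hS hx)).2.2.1
  simpa using this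

lemma top_not_interior (S : Finset Plane) (hS : S.Nonempty) {x y : ℝ} (hy : upperF S x ≤ y) :
    pt x y ∉ interior (hullS S) := by
  intro hmem
  rw [mem_interior_iff_mem_nhds, Metric.mem_nhds_iff] at hmem
  obtain ⟨ε, hε, hball⟩ := hmem
  have hq : pt x (y + ε/2) ∈ hullS S := by
    apply hball
    rw [Metric.mem_ball, dist_pt_vert]
    rw [abs_of_pos (by linarith)]
    linarith
  have : y + ε/2 ≤ upperF S x := le_csSup (slice_bddAbove S hS x) hq
  linarith

lemma upperF_concave (S : Finset Plane) (hS : S.Nonempty) {x₁ x₂ t : ℝ}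
    (h₁ : x₁ ∈ Set.Icc (xlo S hS) (xhi S hS))
    (h₂ : x₂ ∈ Set.Icc (xlo S hS) (xhi S hS)) (ht0 : 0 ≤ t) (ht1 : t ≤ 1) :
    (1-t) * upperF S x₁ + t * upperF S x₂ ≤ upperF S ((1-t)*x₁ + t*x₂) := by
  have hT₁ := upperF_mem S hS h₁
  have hT₂ := upperF_mem S hS h₂
  have hmem : (1-t) • pt x₁ (upperF S x₁) + t • pt x₂ (upperF S x₂) ∈ hullS S :=
    (hull_convex S) hT₁ hT₂ (by linarith) ht0 (by ring)
  have h0 : ((1-t) • pt x₁ (upperF S x₁) + t • pt x₂ (upperF S x₂)) 0 = (1-t)*x₁ + t*x₂ := by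
    rw [combo_apply]; simp
  have h1 : ((1-t) • pt x₁ (upperF S x₁) + t • pt x₂ (upperF S x₂)) 1
      = (1-t)*upperF S x₁ + t*upperF S x₂ := by
    rw [combo_apply]; simp
  have := le_upperF S hS hmem
  rw [h0, h1] at this
  exact this

end AAGD
namespace AAGD

lemma hull_filter_le (S : Finset Plane) (u : ℝ) :
    hullS (S.filter fun p => p 0 ≤ u) ⊆ {q : Plane | q 0 ≤ u} := by
  apply convexHull_min
  · intro q hq
    simp only [Finset.coe_filter, Set.mem_setOf_eq] at hq
    exact hq.2
  · exact (convex_Iic u).is_linear_preimage (isLinearMap_coord 0)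

lemma hull_filter_ge (S : Finset Plane) (v : ℝ) :
    hullS (S.filter fun p => v ≤ p 0) ⊆ {q : Plane | v ≤ q 0} := by
  apply convexHull_min
  · intro q hq
    simp only [Finset.coe_filter, Set.mem_setOf_eq] at hq
    exact hq.2
  · exact (convex_Ici v).is_linear_preimage (isLinearMap_coord 0)

lemma upperF_cell (S : Finset Plane) (hS : S.Nonempty) {u v : ℝ}
    (hu : xlo S hS ≤ u) (huv : u < v) (hv : v ≤ xhi S hS)
    (hgap : ∀ p ∈ S, ¬(u < p 0 ∧ p 0 < v)) {t : ℝ} (ht0 : 0 ≤ t) (ht1 : t ≤ 1) :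
    upperF S ((1-t)*u + t*v) = (1-t)*upperF S u + t*upperF S v := by
  have hui : u ∈ Set.Icc (xlo S hS) (xhi S hS) := ⟨hu, by linarith⟩
  have hvi : v ∈ Set.Icc (xlo S hS) (xhi S hS) := ⟨by linarith, hv⟩
  have hwi : (1-t)*u + t*v ∈ Set.Icc (xlo S hS) (xhi S hS) := by
    constructor <;> nlinarith
  refine le_antisymm ?_ (upperF_concave S hS hui hvi ht0 ht1)
  -- the hard direction
  set Sl := S.filter (fun p => p 0 ≤ u) with hSl
  set Sr := S.filter (fun p => v ≤ p 0) with hSr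
  have hSlne : (Sl : Set Plane).Nonempty := by
    obtain ⟨q, hq, hq'⟩ : ∃ q ∈ S, q 0 = xlo S hS := by
      have := (S.image fun p : Plane => p 0).min'_mem (hS.image _)
      rw [Finset.mem_image] at this
      exact this
    refine ⟨q, ?_⟩
    simp only [hSl, Finset.coe_filter, Set.mem_setOf_eq]
    exact ⟨hq, by rw [hq']; exact hu⟩
  have hSrne : (Sr : Set Plane).Nonempty := by
    obtain ⟨q, hq, hq'⟩ : ∃ q ∈ S, q 0 = xhi S hS := by
      have := (S.image fun p : Plane => p 0).max'_mem (hS.image _)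
      rw [Finset.mem_image] at this
      exact this
    refine ⟨q, ?_⟩
    simp only [hSr, Finset.coe_filter, Set.mem_setOf_eq]
    exact ⟨hq, by rw [hq']; linarith⟩
  have hcover : (S : Set Plane) = (Sl : Set Plane) ∪ (Sr : Set Plane) := by
    ext q
    simp only [Set.mem_union, hSl, hSr, Finset.coe_filter, Set.mem_setOf_eq]
    constructor
    · intro hq
      rcases le_or_gt (q 0) u with h | h
      · exact Or.inl ⟨hq, h⟩
      · refine Or.inr ⟨hq, ?_⟩
        by_contra hlt
        exact hgap q hq ⟨h, lt_of_not_ge hlt⟩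
    · rintro (⟨hq, _⟩ | ⟨hq, _⟩) <;> exact hq
  have hjoin : hullS S = convexJoin ℝ (hullS Sl) (hullS Sr) := by
    rw [hullS, hcover, convexHull_union hSlne hSrne]
    rfl
  have hp : pt ((1-t)*u + t*v) (upperF S ((1-t)*u + t*v)) ∈ hullS S := upperF_mem S hS hwi
  rw [hjoin, mem_convexJoin] at hp
  obtain ⟨A, hA, B, hB, hseg⟩ := hp
  obtain ⟨aa, bb, ha, hb, hab, hcomb⟩ := hseg
  have hA' : A ∈ hullS S := convexHull_mono (by rw [hcover]; exact Set.subset_union_left) hA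
  have hB' : B ∈ hullS S := convexHull_mono (by rw [hcover]; exact Set.subset_union_right) hB
  have hAx : A 0 ≤ u := hull_filter_le S u hA
  have hBx : v ≤ B 0 := hull_filter_ge S v hB
  have hD : (0:ℝ) < B 0 - A 0 := by linarith
  -- coordinates of the combination
  have hx : aa * A 0 + bb * B 0 = (1-t)*u + t*v := by
    have : (aa • A + bb • B) 0 = pt ((1-t)*u + t*v) (upperF S ((1-t)*u + t*v)) 0 := by rw [hcomb]
    rw [combo_apply] at this
    simpa using this
  have hy : aa * A 1 + bb * B 1 = upperF S ((1-t)*u + t*v) := by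
    have : (aa • A + bb • B) 1 = pt ((1-t)*u + t*v) (upperF S ((1-t)*u + t*v)) 1 := by rw [hcomb]
    rw [combo_apply] at this
    simpa using this
  -- chord value at abscissa x₀ is at most upperF S x₀
  have chord : ∀ x₀ : ℝ, A 0 ≤ x₀ → x₀ ≤ B 0 →
      (B 0 - x₀) * A 1 + (x₀ - A 0) * B 1 ≤ (B 0 - A 0) * upperF S x₀ := by
    intro x₀ h₁ h₂
    set s₀ := (x₀ - A 0) / (B 0 - A 0) with hs₀
    have hs00 : 0 ≤ s₀ := div_nonneg (by linarith) hD.le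
    have hs01 : s₀ ≤ 1 := by
      rw [hs₀, div_le_one hD]; linarith
    have hC : (1 - s₀) • A + s₀ • B ∈ hullS S :=
      (hull_convex S) hA' hB' (by linarith) hs00 (by ring)
    have hC0 : ((1 - s₀) • A + s₀ • B) 0 = x₀ := by
      rw [combo_apply, hs₀]
      field_simp
      ring
    have hC1 : ((1 - s₀) • A + s₀ • B) 1 = (1 - s₀) * A 1 + s₀ * B 1 := by
      rw [combo_apply]
    have := le_upperF S hS hC
    rw [hC0, hC1] at this
    have hmul := mul_le_mul_of_nonneg_left this hD.le
    calc (B 0 - x₀) * A 1 + (x₀ - A 0) * B 1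
        = (B 0 - A 0) * ((1 - s₀) * A 1 + s₀ * B 1) := by
          rw [hs₀]; field_simp; ring
      _ ≤ (B 0 - A 0) * upperF S x₀ := hmul
  have hfu := chord u hAx (by linarith)
  have hfv := chord v (by linarith) hBx
  have m1 := mul_le_mul_of_nonneg_left hfu (by linarith : (0:ℝ) ≤ 1 - t)
  have m2 := mul_le_mul_of_nonneg_left hfv ht0
  have hkey : (1-t)*((B 0 - u) * A 1 + (u - A 0) * B 1) + t*((B 0 - v) * A 1 + (v - A 0) * B 1)
      = (B 0 - A 0) * (aa * A 1 + bb * B 1) := by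
    linear_combination (A 1 - B 1) * hx + (B 1 * A 0 - A 1 * B 0) * hab
  have hfinal : (B 0 - A 0) * upperF S ((1-t)*u + t*v)
      ≤ (B 0 - A 0) * ((1-t)*upperF S u + t*upperF S v) := by
    rw [← hy, ← hkey]
    calc (1-t)*((B 0 - u) * A 1 + (u - A 0) * B 1) + t*((B 0 - v) * A 1 + (v - A 0) * B 1)
        ≤ (1-t)*((B 0 - A 0) * upperF S u) + t*((B 0 - A 0) * upperF S v) := add_le_add m1 m2
      _ = (B 0 - A 0) * ((1-t)*upperF S u + t*upperF S v) := by ring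
  exact le_of_mul_le_mul_left hfinal hD

end AAGD
namespace AAGD

lemma coord_continuous (i : Fin 2) : Continuous (fun p : Plane => p i) := by
  have : LipschitzWith 1 (fun p : Plane => p i) := by
    apply LipschitzWith.of_dist_le_mul
    intro p q
    rw [Real.dist_eq]
    simpa using coord_abs_le_dist p q i
  exact this.continuous

def nudge (p : Plane) (i : Fin 2) (r : ℝ) : Plane := p + r • EuclideanSpace.single i (1:ℝ)

lemma nudge_dist (p : Plane) (i : Fin 2) (r : ℝ) : dist (nudge p i r) p = |r| := by
  rw [nudge, dist_eq_norm, add_sub_cancel_left, norm_smul, EuclideanSpace.norm_single]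
  simp

lemma nudge_self (p : Plane) (i : Fin 2) (r : ℝ) : nudge p i r i = p i + r := by
  rw [nudge]
  have : (p + r • EuclideanSpace.single i (1:ℝ)) i = p i + r * (EuclideanSpace.single i (1:ℝ)) i := rfl
  rw [this, EuclideanSpace.single_apply, if_pos rfl]
  ring

lemma nudge_other (p : Plane) (i j : Fin 2) (hij : j ≠ i) (r : ℝ) : nudge p i r j = p j := by
  rw [nudge]
  have : (p + r • EuclideanSpace.single i (1:ℝ)) j = p j + r * (EuclideanSpace.single i (1:ℝ)) j := rfl
  rw [this, EuclideanSpace.single_apply, if_neg hij]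
  ring

section Rect

variable {h : ℕ} {Q : Fin h → Set Plane} {a b c d : Fin h → ℝ}

lemma interior_box
    (hQ : ∀ i, Q i = {p : Plane | p 0 ∈ Set.Icc (a i) (b i) ∧ p 1 ∈ Set.Icc (c i) (d i)})
    (i : Fin h) :
    interior (Q i) = {p : Plane | a i < p 0 ∧ p 0 < b i ∧ c i < p 1 ∧ p 1 < d i} := by
  apply subset_antisymm
  · intro p hp
    have hpQ : p ∈ Q i := interior_subset hp
    rw [hQ i] at hpQ
    obtain ⟨⟨h1, h2⟩, h3, h4⟩ := hpQ
    rw [mem_interior_iff_mem_nhds, Metric.mem_nhds_iff] at hp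
    obtain ⟨ε, hε, hball⟩ := hp
    have key : ∀ (j : Fin 2) (r : ℝ), |r| < ε → nudge p j r ∈ Q i := by
      intro j r hr
      apply hball
      rw [Metric.mem_ball, nudge_dist]
      exact hr
    have k0m := key 0 (-(ε/2)) (by rw [abs_neg, abs_of_pos (by linarith)]; linarith)
    have k0p := key 0 (ε/2) (by rw [abs_of_pos (by linarith)]; linarith)
    have k1m := key 1 (-(ε/2)) (by rw [abs_neg, abs_of_pos (by linarith)]; linarith)
    have k1p := key 1 (ε/2) (by rw [abs_of_pos (by linarith)]; linarith)
    rw [hQ i] at k0m k0p k1m k1p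
    have e0m := k0m.1.1; have e0p := k0p.1.2; have e1m := k1m.2.1; have e1p := k1p.2.2
    rw [nudge_self] at e0m e0p
    rw [nudge_self] at e1m e1p
    exact ⟨by linarith, by linarith, by linarith, by linarith⟩
  · apply interior_maximal
    · intro p hp
      rw [hQ i]
      exact ⟨⟨hp.1.le, hp.2.1.le⟩, hp.2.2.1.le, hp.2.2.2.le⟩
    · have : {p : Plane | a i < p 0 ∧ p 0 < b i ∧ c i < p 1 ∧ p 1 < d i}
          = ((fun p : Plane => p 0) ⁻¹' Set.Ioo (a i) (b i)) ∩
            ((fun p : Plane => p 1) ⁻¹' Set.Ioo (c i) (d i)) := by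
        ext p
        simp only [Set.mem_setOf_eq, Set.mem_inter_iff, Set.mem_preimage, Set.mem_Ioo]
        tauto
      rw [this]
      exact ((isOpen_Ioo).preimage (coord_continuous 0)).inter
        ((isOpen_Ioo).preimage (coord_continuous 1))

end Rect

end AAGD
namespace AAGD

def PDom (S : Finset Plane) {h : ℕ} (Q : Fin h → Set Plane) : Set Plane :=
  hullS S \ ⋃ i, interior (Q i)

lemma mem_PDom {S : Finset Plane} {h : ℕ} {Q : Fin h → Set Plane} {z : Plane} :
    z ∈ PDom S Q ↔ z ∈ hullS S ∧ ∀ i, z ∉ interior (Q i) := by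
  simp only [PDom, Set.mem_diff, Set.mem_iUnion, not_exists]

section Staircase

variable (S : Finset Plane) {h : ℕ} {Q : Fin h → Set Plane} {a b c d : Fin h → ℝ}

lemma vert_seg_good
    (hQ : ∀ i, Q i = {p : Plane | p 0 ∈ Set.Icc (a i) (b i) ∧ p 1 ∈ Set.Icc (c i) (d i)})
    {z : Plane} {y' : ℝ}
    (hz : z ∈ hullS S) (htm : pt (z 0) y' ∈ hullS S) (hy : z 1 ≤ y')
    (hav : ∀ (i : Fin h) (y : ℝ), z 1 ≤ y → y ≤ y' →
      ¬(a i < z 0 ∧ z 0 < b i ∧ c i < y ∧ y < d i)) :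
    Good (PDom S Q) z (pt (z 0) y') (y' - z 1) := by
  have hgood : Good (PDom S Q) z (pt (z 0) y') (dist z (pt (z 0) y')) := by
    apply Good.of_seg
    intro u hu
    rw [mem_PDom]
    have h0 : ((1-u) • z + u • pt (z 0) y') 0 = z 0 := by
      rw [combo_apply, pt_zero]; ring
    have h1 : ((1-u) • z + u • pt (z 0) y') 1 = (1-u) * z 1 + u * y' := by
      rw [combo_apply, pt_one]
    constructor
    · exact (hull_convex S) hz htm (by linarith [hu.1, hu.2]) hu.1 (by ring)
    · intro i hint
      rw [interior_box hQ i, Set.mem_setOf_eq, h0, h1] at hint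
      exact hav i ((1-u) * z 1 + u * y') (by nlinarith [hu.1, hu.2])
        (by nlinarith [hu.1, hu.2]) hint
  apply hgood.mono
  have heq : dist z (pt (z 0) y') = y' - z 1 := by
    calc dist z (pt (z 0) y') = dist (pt (z 0) (z 1)) (pt (z 0) y') := by rw [pt_eta]
      _ = |z 1 - y'| := dist_pt_vert _ _ _
      _ = y' - z 1 := by rw [abs_sub_comm, abs_of_nonneg (by linarith)]
  rw [heq]

lemma horiz_seg_good
    (hQ : ∀ i, Q i = {p : Plane | p 0 ∈ Set.Icc (a i) (b i) ∧ p 1 ∈ Set.Icc (c i) (d i)})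
    {z : Plane} {x' : ℝ}
    (hz : z ∈ hullS S) (htm : pt x' (z 1) ∈ hullS S) (hx : x' ≤ z 0)
    (hav : ∀ (i : Fin h) (x : ℝ), x' ≤ x → x ≤ z 0 →
      ¬(a i < x ∧ x < b i ∧ c i < z 1 ∧ z 1 < d i)) :
    Good (PDom S Q) z (pt x' (z 1)) (z 0 - x') := by
  have hgood : Good (PDom S Q) z (pt x' (z 1)) (dist z (pt x' (z 1))) := by
    apply Good.of_seg
    intro u hu
    rw [mem_PDom]
    have h0 : ((1-u) • z + u • pt x' (z 1)) 0 = (1-u) * z 0 + u * x' := by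
      rw [combo_apply, pt_zero]
    have h1 : ((1-u) • z + u • pt x' (z 1)) 1 = z 1 := by
      rw [combo_apply, pt_one]; ring
    constructor
    · exact (hull_convex S) hz htm (by linarith [hu.1, hu.2]) hu.1 (by ring)
    · intro i hint
      rw [interior_box hQ i, Set.mem_setOf_eq, h0, h1] at hint
      exact hav i ((1-u) * z 0 + u * x') (by nlinarith [hu.1, hu.2])
        (by nlinarith [hu.1, hu.2]) hint
  apply hgood.mono
  have heq : dist z (pt x' (z 1)) = z 0 - x' := by
    calc dist z (pt x' (z 1)) = dist (pt (z 0) (z 1)) (pt x' (z 1)) := by rw [pt_eta]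
      _ = |z 0 - x'| := dist_pt_horiz _ _ _
      _ = z 0 - x' := abs_of_nonneg (by linarith)
  rw [heq]

lemma escape_top (hS : S.Nonempty)
    (hQ : ∀ i, Q i = {p : Plane | p 0 ∈ Set.Icc (a i) (b i) ∧ p 1 ∈ Set.Icc (c i) (d i)})
    {z : Plane} (hz : z ∈ hullS S) (hzi : ∀ i, z ∉ interior (Q i))
    (hnb : ∀ j, ¬(a j < z 0 ∧ z 0 < b j ∧ z 1 ≤ c j)) :
    z 1 ≤ upperF S (z 0) ∧
      Good (PDom S Q) z (pt (z 0) (upperF S (z 0))) (upperF S (z 0) - z 1) := by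
  have hb := mem_hull_bounds S hS hz
  have hfz : z 1 ≤ upperF S (z 0) := le_upperF S hS hz
  refine ⟨hfz, vert_seg_good S hQ hz (upperF_mem S hS ⟨hb.1, hb.2.1⟩) hfz ?_⟩
  intro i y hy1 hy2 hbox
  obtain ⟨k1, k2, k3, k4⟩ := hbox
  rcases le_or_gt (z 1) (c i) with hc | hc
  · exact hnb i ⟨k1, k2, hc⟩
  · apply hzi i
    rw [interior_box hQ i]
    exact ⟨k1, k2, hc, by linarith⟩

lemma escape_main (hS : S.Nonempty)
    (hQ : ∀ i, Q i = {p : Plane | p 0 ∈ Set.Icc (a i) (b i) ∧ p 1 ∈ Set.Icc (c i) (d i)})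
    (hab : ∀ i, a i < b i ∧ c i < d i)
    (hdisj : Pairwise (Function.onFun Disjoint Q))
    (hQi : ∀ i, Q i ⊆ interior (hullS S)) :
    ∀ (n : ℕ) (z : Plane), z ∈ hullS S → (∀ i, z ∉ interior (Q i)) →
      (∀ j, ¬(a j < z 0 ∧ z 0 < b j ∧ c j = z 1)) →
      (Finset.univ.filter (fun j : Fin h => z 1 < c j)).card ≤ n →
      ∃ xe, xlo S hS ≤ xe ∧ xe ≤ z 0 ∧ z 1 ≤ upperF S xe ∧
        Good (PDom S Q) z (pt xe (upperF S xe))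
          ((z 0 - xe) + (upperF S xe - z 1)) := by
  intro n
  induction n with
  | zero =>
    intro z hz hzi hInv hcard
    have hnb : ∀ j, ¬(a j < z 0 ∧ z 0 < b j ∧ z 1 ≤ c j) := by
      intro j hj
      have hj3 : z 1 < c j := lt_of_le_of_ne hj.2.2 (fun he => hInv j ⟨hj.1, hj.2.1, he.symm⟩)
      have : 0 < (Finset.univ.filter (fun j : Fin h => z 1 < c j)).card :=
        Finset.card_pos.mpr ⟨j, Finset.mem_filter.mpr ⟨Finset.mem_univ _, hj3⟩⟩
      omega
    obtain ⟨hfz, hgood⟩ := escape_top S hS hQ hz hzi hnb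
    have hb := mem_hull_bounds S hS hz
    exact ⟨z 0, hb.1, le_rfl, hfz, hgood.mono (le_of_eq (by ring))⟩
  | succ n IH =>
    intro z hz hzi hInv hcard
    set Blk := Finset.univ.filter (fun j : Fin h => a j < z 0 ∧ z 0 < b j ∧ z 1 ≤ c j) with hBlk
    by_cases hBlkne : Blk.Nonempty
    · obtain ⟨R, hRmem, hRmin⟩ := Finset.exists_min_image Blk c hBlkne
      rw [hBlk, Finset.mem_filter] at hRmem
      obtain ⟨-, hR1, hR2, hR3⟩ := hRmem
      have hR3' : z 1 < c R := lt_of_le_of_ne hR3 (fun he => hInv R ⟨hR1, hR2, he.symm⟩)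
      -- the blocked point m and the corner w
      have hmQ : pt (z 0) (c R) ∈ Q R := by
        rw [hQ R]
        simp only [Set.mem_setOf_eq, pt_zero, pt_one, Set.mem_Icc]
        exact ⟨⟨hR1.le, hR2.le⟩, le_rfl, (hab R).2.le⟩
      have hmhull : pt (z 0) (c R) ∈ hullS S := interior_subset (hQi R hmQ)
      have hwQ : pt (a R) (c R) ∈ Q R := by
        rw [hQ R]
        simp only [Set.mem_setOf_eq, pt_zero, pt_one, Set.mem_Icc]
        exact ⟨⟨le_rfl, (hab R).1.le⟩, le_rfl, (hab R).2.le⟩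
      have hwhull : pt (a R) (c R) ∈ hullS S := interior_subset (hQi R hwQ)
      -- first segment: up to the bottom edge of R
      have seg1 : Good (PDom S Q) z (pt (z 0) (c R)) (c R - z 1) := by
        apply vert_seg_good S hQ hz hmhull hR3'.le
        intro i y hy1 hy2 hbox
        obtain ⟨k1, k2, k3, k4⟩ := hbox
        rcases le_or_gt (z 1) (c i) with hc | hc
        · have hiB : i ∈ Blk := by
            rw [hBlk, Finset.mem_filter]
            exact ⟨Finset.mem_univ _, k1, k2, hc⟩
          have := hRmin i hiB
          linarith
        · apply hzi i
          rw [interior_box hQ i]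
          exact ⟨k1, k2, hc, by linarith⟩
      -- second segment: left to the corner of R
      have seg2 : Good (PDom S Q) (pt (z 0) (c R)) (pt (a R) (c R)) (z 0 - a R) := by
        have := horiz_seg_good S hQ (z := pt (z 0) (c R)) (x' := a R) hmhull
          (by simpa using hwhull) (by simpa using hR1.le) ?_
        · simpa using this
        · intro i x hx1 hx2 hbox
          simp only [pt_zero, pt_one] at hbox hx1 hx2
          obtain ⟨k1, k2, k3, k4⟩ := hbox
          have hpQi : pt x (c R) ∈ Q i := by
            rw [hQ i]
            simp only [Set.mem_setOf_eq, pt_zero, pt_one, Set.mem_Icc]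
            exact ⟨⟨k1.le, k2.le⟩, k3.le, k4.le⟩
          have hpQR : pt x (c R) ∈ Q R := by
            rw [hQ R]
            simp only [Set.mem_setOf_eq, pt_zero, pt_one, Set.mem_Icc]
            exact ⟨⟨hx1, by linarith⟩, le_rfl, (hab R).2.le⟩
          by_cases hiR : i = R
          · subst hiR
            exact absurd k3 (lt_irrefl _)
          · exact Set.disjoint_left.mp (hdisj hiR) hpQi hpQR
      -- the corner satisfies all invariants
      have hwzi : ∀ i, pt (a R) (c R) ∉ interior (Q i) := by
        intro i hint
        by_cases hiR : i = R
        · subst hiR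
          rw [interior_box hQ i, Set.mem_setOf_eq, pt_zero] at hint
          exact absurd hint.1 (lt_irrefl _)
        · exact Set.disjoint_left.mp (hdisj hiR) (interior_subset hint) hwQ
      have hwInv : ∀ j, ¬(a j < (pt (a R) (c R)) 0 ∧ (pt (a R) (c R)) 0 < b j
          ∧ c j = (pt (a R) (c R)) 1) := by
        intro j hj
        simp only [pt_zero, pt_one] at hj
        obtain ⟨k1, k2, k3⟩ := hj
        have hjR : j ≠ R := by
          intro he; subst he; exact absurd k1 (lt_irrefl _)
        have hwQj : pt (a R) (c R) ∈ Q j := by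
          rw [hQ j]
          simp only [Set.mem_setOf_eq, pt_zero, pt_one, Set.mem_Icc]
          exact ⟨⟨k1.le, k2.le⟩, k3.le, by rw [← k3]; exact (hab j).2.le⟩
        exact Set.disjoint_left.mp (hdisj hjR) hwQj hwQ
      have hwcard : (Finset.univ.filter (fun j : Fin h => (pt (a R) (c R)) 1 < c j)).card ≤ n := by
        have hsub : Finset.univ.filter (fun j : Fin h => c R < c j)
            ⊆ Finset.univ.filter (fun j : Fin h => z 1 < c j) := by
          intro j hj
          simp only [Finset.mem_filter] at hj ⊢
          exact ⟨hj.1, by linarith [hj.2]⟩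
        have hRz : R ∈ Finset.univ.filter (fun j : Fin h => z 1 < c j) :=
          Finset.mem_filter.mpr ⟨Finset.mem_univ _, hR3'⟩
        have hlt : (Finset.univ.filter (fun j : Fin h => c R < c j)).card
            < (Finset.univ.filter (fun j : Fin h => z 1 < c j)).card := by
          apply Finset.card_lt_card
          rw [Finset.ssubset_iff_of_subset hsub]
          exact ⟨R, hRz, by simp⟩
        simp only [pt_one]
        exact Nat.lt_succ_iff.mp (Nat.lt_of_lt_of_le hlt hcard)
      obtain ⟨xe, hxe1, hxe2, hxe3, goodw⟩ := IH (pt (a R) (c R)) hwhull hwzi hwInv hwcard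
      simp only [pt_zero, pt_one] at hxe2 hxe3
      refine ⟨xe, hxe1, by linarith, by linarith, ?_⟩
      have goodw' : Good (PDom S Q) (pt (a R) (c R)) (pt xe (upperF S xe))
          ((a R - xe) + (upperF S xe - c R)) := by
        apply goodw.mono
        simp only [pt_zero, pt_one]
        exact le_rfl
      exact ((seg1.trans seg2).trans goodw').mono (le_of_eq (by ring))
    · -- no blockers: straight to the top
      have hnb : ∀ j, ¬(a j < z 0 ∧ z 0 < b j ∧ z 1 ≤ c j) := by
        intro j hj
        exact hBlkne ⟨j, by rw [hBlk, Finset.mem_filter]; exact ⟨Finset.mem_univ _, hj⟩⟩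
      obtain ⟨hfz, hgood⟩ := escape_top S hS hQ hz hzi hnb
      have hb := mem_hull_bounds S hS hz
      exact ⟨z 0, hb.1, le_rfl, hfz, hgood.mono (le_of_eq (by ring))⟩

lemma escape (hS : S.Nonempty)
    (hQ : ∀ i, Q i = {p : Plane | p 0 ∈ Set.Icc (a i) (b i) ∧ p 1 ∈ Set.Icc (c i) (d i)})
    (hab : ∀ i, a i < b i ∧ c i < d i)
    (hdisj : Pairwise (Function.onFun Disjoint Q))
    (hQi : ∀ i, Q i ⊆ interior (hullS S))
    {z : Plane} (hz : z ∈ PDom S Q) :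
    ∃ xe, xlo S hS ≤ xe ∧ xe ≤ z 0 ∧ z 1 ≤ upperF S xe ∧
      Good (PDom S Q) z (pt xe (upperF S xe)) ((z 0 - xe) + (upperF S xe - z 1)) := by
  rw [mem_PDom] at hz
  obtain ⟨hzh, hzi⟩ := hz
  by_cases hInv : ∀ j, ¬(a j < z 0 ∧ z 0 < b j ∧ c j = z 1)
  · exact escape_main S hS hQ hab hdisj hQi _ z hzh hzi hInv le_rfl
  · push_neg at hInv
    obtain ⟨j, hj1, hj2, hj3⟩ := hInv
    have hzQj : z ∈ Q j := by
      rw [hQ j]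
      exact ⟨⟨hj1.le, hj2.le⟩, hj3.le, by rw [← hj3]; exact (hab j).2.le⟩
    have hwQ : pt (a j) (z 1) ∈ Q j := by
      rw [hQ j]
      simp only [Set.mem_setOf_eq, pt_zero, pt_one, Set.mem_Icc]
      exact ⟨⟨le_rfl, (hab j).1.le⟩, hj3.le, by rw [← hj3]; exact (hab j).2.le⟩
    have hwhull : pt (a j) (z 1) ∈ hullS S := interior_subset (hQi j hwQ)
    have seg0 : Good (PDom S Q) z (pt (a j) (z 1)) (z 0 - a j) := by
      apply horiz_seg_good S hQ hzh hwhull hj1.le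
      intro i x hx1 hx2 hbox
      obtain ⟨k1, k2, k3, k4⟩ := hbox
      have hpQi : pt x (z 1) ∈ Q i := by
        rw [hQ i]
        simp only [Set.mem_setOf_eq, pt_zero, pt_one, Set.mem_Icc]
        exact ⟨⟨k1.le, k2.le⟩, k3.le, k4.le⟩
      have hpQj : pt x (z 1) ∈ Q j := by
        rw [hQ j]
        simp only [Set.mem_setOf_eq, pt_zero, pt_one, Set.mem_Icc]
        exact ⟨⟨hx1, by linarith⟩, hj3.le, by rw [← hj3]; exact (hab j).2.le⟩
      by_cases hij : i = j
      · subst hij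
        rw [hj3] at k3
        exact absurd k3 (lt_irrefl _)
      · exact Set.disjoint_left.mp (hdisj hij) hpQi hpQj
    have hwzi : ∀ i, pt (a j) (z 1) ∉ interior (Q i) := by
      intro i hint
      by_cases hij : i = j
      · subst hij
        rw [interior_box hQ i, Set.mem_setOf_eq, pt_zero] at hint
        exact absurd hint.1 (lt_irrefl _)
      · exact Set.disjoint_left.mp (hdisj hij) (interior_subset hint) hwQ
    have hwInv : ∀ k, ¬(a k < (pt (a j) (z 1)) 0 ∧ (pt (a j) (z 1)) 0 < b k
        ∧ c k = (pt (a j) (z 1)) 1) := by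
      intro k hk
      simp only [pt_zero, pt_one] at hk
      obtain ⟨k1, k2, k3⟩ := hk
      have hkj : k ≠ j := by
        intro he; subst he; exact absurd k1 (lt_irrefl _)
      have hwQk : pt (a j) (z 1) ∈ Q k := by
        rw [hQ k]
        simp only [Set.mem_setOf_eq, pt_zero, pt_one, Set.mem_Icc]
        exact ⟨⟨k1.le, k2.le⟩, k3.le, by rw [← k3]; exact (hab k).2.le⟩
      exact Set.disjoint_left.mp (hdisj hkj) hwQk hwQ
    obtain ⟨xe, hxe1, hxe2, hxe3, goodw⟩ := escape_main S hS hQ hab hdisj hQi _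
      (pt (a j) (z 1)) hwhull hwzi hwInv le_rfl
    simp only [pt_zero, pt_one] at hxe2 hxe3
    refine ⟨xe, hxe1, by linarith, hxe3, ?_⟩
    have goodw' : Good (PDom S Q) (pt (a j) (z 1)) (pt xe (upperF S xe))
        ((a j - xe) + (upperF S xe - z 1)) := by
      apply goodw.mono
      simp only [pt_zero, pt_one]
      exact le_rfl
    exact (seg0.trans goodw').mono (le_of_eq (by ring))

end Staircase

end AAGD
namespace AAGD

lemma Good.refl {P : Set Plane} {s : Plane} (hs : s ∈ P) : Good P s s 0 := by
  refine ⟨le_rfl, fun _ => s, continuous_const, rfl, rfl, fun u _ => hs, ?_⟩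
  have : eVariationOn (fun _ : ℝ => s) (Set.Icc 0 1) = 0 := by
    apply eVariationOn.constant_on
    intro x hx y hy
    obtain ⟨x', -, hx'⟩ := hx
    obtain ⟨y', -, hy'⟩ := hy
    rw [← hx', ← hy']
  rw [pathLen, this]
  simp

section Chain

variable (S : Finset Plane) {h : ℕ} {Q : Fin h → Set Plane} {a b c d : Fin h → ℝ}

/-- three point concavity inequality, cleared of denominators -/
lemma concave3 (hS : S.Nonempty) {x1 x2 x3 : ℝ} (h1 : x1 ∈ Set.Icc (xlo S hS) (xhi S hS))
    (h3 : x3 ∈ Set.Icc (xlo S hS) (xhi S hS)) (h12 : x1 < x2) (h23 : x2 < x3) :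
    (x3 - x2) * upperF S x1 + (x2 - x1) * upperF S x3 ≤ (x3 - x1) * upperF S x2 := by
  have h13 : (0:ℝ) < x3 - x1 := by linarith
  set t := (x2 - x1) / (x3 - x1) with ht
  have ht0 : 0 ≤ t := div_nonneg (by linarith) h13.le
  have ht1 : t ≤ 1 := by rw [ht, div_le_one h13]; linarith
  have hcc := upperF_concave S hS h1 h3 ht0 ht1
  have hx : (1 - t) * x1 + t * x3 = x2 := by rw [ht]; field_simp; ring
  rw [hx] at hcc
  have := mul_le_mul_of_nonneg_left hcc h13.le
  calc (x3 - x2) * upperF S x1 + (x2 - x1) * upperF S x3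
      = (x3 - x1) * ((1 - t) * upperF S x1 + t * upperF S x3) := by
        rw [ht]; field_simp; ring
    _ ≤ (x3 - x1) * upperF S x2 := this

/-- single cell segment of the upper chain -/
lemma cell_seg_good (hS : S.Nonempty)
    (hQi : ∀ i, Q i ⊆ interior (hullS S))
    {ξ xh : ℝ} (hξ : xlo S hS ≤ ξ) (hlt : ξ < xh) (hxh : xh ≤ xhi S hS)
    (hgap : ∀ p ∈ S, ¬(ξ < p 0 ∧ p 0 < xh)) :
    Good (PDom S Q) (pt xh (upperF S xh)) (pt ξ (upperF S ξ))
      ((xh - ξ) + |upperF S xh - upperF S ξ|) := by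
  have hgood : Good (PDom S Q) (pt xh (upperF S xh)) (pt ξ (upperF S ξ))
      (dist (pt xh (upperF S xh)) (pt ξ (upperF S ξ))) := by
    apply Good.of_seg
    intro u hu
    rw [mem_PDom]
    have hmemξ := upperF_mem S hS (⟨hξ, by linarith⟩ : ξ ∈ Set.Icc (xlo S hS) (xhi S hS))
    have hmemxh := upperF_mem S hS (⟨by linarith, hxh⟩ : xh ∈ Set.Icc (xlo S hS) (xhi S hS))
    have hmem : (1-u) • pt xh (upperF S xh) + u • pt ξ (upperF S ξ) ∈ hullS S :=
      (hull_convex S) hmemxh hmemξ (by linarith [hu.1, hu.2]) hu.1 (by ring)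
    refine ⟨hmem, ?_⟩
    -- the combination is exactly a point of the graph of upperF
    have h0 : ((1-u) • pt xh (upperF S xh) + u • pt ξ (upperF S ξ)) 0
        = (1-u) * xh + u * ξ := by rw [combo_apply, pt_zero, pt_zero]
    have h1 : ((1-u) • pt xh (upperF S xh) + u • pt ξ (upperF S ξ)) 1
        = (1-u) * upperF S xh + u * upperF S ξ := by rw [combo_apply, pt_one, pt_one]
    have hcell := upperF_cell S hS hξ hlt hxh hgap (t := 1 - u)
      (by linarith [hu.2]) (by linarith [hu.1])
    have hxeq : (1 - (1-u)) * ξ + (1-u) * xh = (1-u) * xh + u * ξ := by ring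
    rw [hxeq] at hcell
    have hyeq : (1 - (1-u)) * upperF S ξ + (1-u) * upperF S xh
        = (1-u) * upperF S xh + u * upperF S ξ := by ring
    rw [hyeq] at hcell
    -- hence it is not in the interior of the hull
    have hni : (1-u) • pt xh (upperF S xh) + u • pt ξ (upperF S ξ) ∉ interior (hullS S) := by
      have hti := top_not_interior S hS (x := (1-u) * xh + u * ξ)
        (y := (1-u) * upperF S xh + u * upperF S ξ) (le_of_eq hcell)
      have hptq : (1-u) • pt xh (upperF S xh) + u • pt ξ (upperF S ξ)
          = pt ((1-u) * xh + u * ξ) ((1-u) * upperF S xh + u * upperF S ξ) := by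
        rw [← h0, ← h1]
        exact (pt_eta _).symm
      intro hcon
      rw [hptq] at hcon
      exact hti hcon
    intro i hcon
    exact hni (hQi i (interior_subset hcon))
  apply hgood.mono
  calc dist (pt xh (upperF S xh)) (pt ξ (upperF S ξ))
      ≤ |pt xh (upperF S xh) 0 - pt ξ (upperF S ξ) 0|
        + |pt xh (upperF S xh) 1 - pt ξ (upperF S ξ) 1| := dist_le_coords _ _
    _ = (xh - ξ) + |upperF S xh - upperF S ξ| := by
        rw [pt_zero, pt_zero, pt_one, pt_one, abs_of_nonneg (by linarith : (0:ℝ) ≤ xh - ξ)]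

lemma chain_base (hS : S.Nonempty) (hQi : ∀ i, Q i ⊆ interior (hullS S))
    {x : ℝ} (hx : x ∈ Set.Icc (xlo S hS) (xhi S hS)) :
    pt x (upperF S x) ∈ PDom S Q := by
  rw [mem_PDom]
  refine ⟨upperF_mem S hS hx, fun i hcon => ?_⟩
  exact top_not_interior S hS (le_refl (upperF S x)) (hQi i (interior_subset hcon))

lemma xlo_mem_grid (hS : S.Nonempty) : ∃ p ∈ S, p 0 = xlo S hS := by
  have := (S.image fun p : Plane => p 0).min'_mem (hS.image _)
  rw [Finset.mem_image] at this
  exact this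

/-- chain walk, monotone case -/
lemma chain_mono (hS : S.Nonempty) (hQi : ∀ i, Q i ⊆ interior (hullS S)) :
    ∀ (n : ℕ) (xh : ℝ), xh ∈ Set.Icc (xlo S hS) (xhi S hS) →
      ((S.image fun p : Plane => p 0).filter (fun g => g < xh)).card ≤ n →
      (∀ u v, xlo S hS ≤ u → u ≤ v → v ≤ xh → upperF S u ≤ upperF S v) →
      Good (PDom S Q) (pt xh (upperF S xh)) (pt (xlo S hS) (upperF S (xlo S hS)))
        ((xh - xlo S hS) + (upperF S xh - upperF S (xlo S hS))) := by
  intro n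
  induction n with
  | zero =>
    intro xh hxh hcard hmono
    have hxe : xh = xlo S hS := by
      by_contra hne
      have hlt : xlo S hS < xh := lt_of_le_of_ne hxh.1 (Ne.symm hne)
      obtain ⟨p, hp, hp'⟩ := xlo_mem_grid S hS
      have : xlo S hS ∈ (S.image fun p : Plane => p 0).filter (fun g => g < xh) := by
        rw [Finset.mem_filter]
        exact ⟨Finset.mem_image.mpr ⟨p, hp, hp'⟩, hlt⟩
      have hpos := Finset.card_pos.mpr ⟨_, this⟩
      exact absurd (Nat.lt_of_lt_of_le hpos hcard) (lt_irrefl 0)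
    subst hxe
    exact (Good.refl (chain_base S hS hQi hxh)).mono (by simp)
  | succ n IH =>
    intro xh hxh hcard hmono
    by_cases hxe : xh ≤ xlo S hS
    · have hxe' : xh = xlo S hS := le_antisymm hxe hxh.1
      subst hxe'
      exact (Good.refl (chain_base S hS hQi hxh)).mono (by simp)
    · push_neg at hxe
      set G := (S.image fun p : Plane => p 0).filter (fun g => g < xh) with hG
      have hGne : G.Nonempty := by
        obtain ⟨p, hp, hp'⟩ := xlo_mem_grid S hS
        refine ⟨xlo S hS, ?_⟩
        rw [hG, Finset.mem_filter]
        exact ⟨Finset.mem_image.mpr ⟨p, hp, hp'⟩, hxe⟩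
      set ξ := G.max' hGne with hξdef
      have hξG : ξ ∈ G := G.max'_mem hGne
      have hξlt : ξ < xh := by
        have := (Finset.mem_filter.mp hξG).2
        exact this
      have hξlo : xlo S hS ≤ ξ := by
        have := (Finset.mem_filter.mp hξG).1
        rw [Finset.mem_image] at this
        obtain ⟨p, hp, hp'⟩ := this
        rw [← hp']
        exact Finset.min'_le _ _ (Finset.mem_image_of_mem _ hp)
      have hgap : ∀ p ∈ S, ¬(ξ < p 0 ∧ p 0 < xh) := by
        intro p hp hcon
        have : p 0 ∈ G := by
          rw [hG, Finset.mem_filter]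
          exact ⟨Finset.mem_image_of_mem _ hp, hcon.2⟩
        have := Finset.le_max' G _ this
        rw [← hξdef] at this
        linarith [hcon.1]
      have hcard' : ((S.image fun p : Plane => p 0).filter (fun g => g < ξ)).card ≤ n := by
        have hsub : (S.image fun p : Plane => p 0).filter (fun g => g < ξ) ⊆ G := by
          intro g hg
          rw [Finset.mem_filter] at hg
          rw [hG, Finset.mem_filter]
          exact ⟨hg.1, by linarith [hg.2]⟩
        have hlt : ((S.image fun p : Plane => p 0).filter (fun g => g < ξ)).card < G.card := by
          apply Finset.card_lt_card
          rw [Finset.ssubset_iff_of_subset hsub]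
          exact ⟨ξ, hξG, by simp⟩
        exact Nat.lt_succ_iff.mp (Nat.lt_of_lt_of_le hlt hcard)
      have hmono' : ∀ u v, xlo S hS ≤ u → u ≤ v → v ≤ ξ → upperF S u ≤ upperF S v := by
        intro u v h1 h2 h3
        exact hmono u v h1 h2 (by linarith)
      have hIH := IH ξ ⟨hξlo, by linarith [hxh.2]⟩ hcard' hmono'
      have hseg := cell_seg_good S hS hQi (Q := Q) hξlo hξlt hxh.2 hgap
      have habs : |upperF S xh - upperF S ξ| = upperF S xh - upperF S ξ := by
        rw [abs_of_nonneg]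
        have := hmono ξ xh hξlo hξlt.le le_rfl
        linarith
      rw [habs] at hseg
      exact (hseg.trans hIH).mono (le_of_eq (by ring))

/-- chain walk, general case -/
lemma chain_main (hS : S.Nonempty) (hQi : ∀ i, Q i ⊆ interior (hullS S)) :
    ∀ (n : ℕ) (xh : ℝ), xh ∈ Set.Icc (xlo S hS) (xhi S hS) →
      ((S.image fun p : Plane => p 0).filter (fun g => g < xh)).card ≤ n →
      Good (PDom S Q) (pt xh (upperF S xh)) (pt (xlo S hS) (upperF S (xlo S hS)))
        ((xh - xlo S hS) + (2 * yhi S hS - upperF S xh - upperF S (xlo S hS))) := by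
  intro n
  induction n with
  | zero =>
    intro xh hxh hcard
    have hxe : xh = xlo S hS := by
      by_contra hne
      have hlt : xlo S hS < xh := lt_of_le_of_ne hxh.1 (Ne.symm hne)
      obtain ⟨p, hp, hp'⟩ := xlo_mem_grid S hS
      have : xlo S hS ∈ (S.image fun p : Plane => p 0).filter (fun g => g < xh) := by
        rw [Finset.mem_filter]
        exact ⟨Finset.mem_image.mpr ⟨p, hp, hp'⟩, hlt⟩
      have hpos := Finset.card_pos.mpr ⟨_, this⟩
      exact absurd (Nat.lt_of_lt_of_le hpos hcard) (lt_irrefl 0)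
    subst hxe
    apply (Good.refl (chain_base S hS hQi hxh)).mono
    have := upperF_le_yhi S hS hxh
    linarith
  | succ n IH =>
    intro xh hxh hcard
    by_cases hxe : xh ≤ xlo S hS
    · have hxe' : xh = xlo S hS := le_antisymm hxe hxh.1
      subst hxe'
      apply (Good.refl (chain_base S hS hQi hxh)).mono
      have := upperF_le_yhi S hS hxh
      linarith
    · push_neg at hxe
      set G := (S.image fun p : Plane => p 0).filter (fun g => g < xh) with hG
      have hGne : G.Nonempty := by
        obtain ⟨p, hp, hp'⟩ := xlo_mem_grid S hS
        refine ⟨xlo S hS, ?_⟩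
        rw [hG, Finset.mem_filter]
        exact ⟨Finset.mem_image.mpr ⟨p, hp, hp'⟩, hxe⟩
      set ξ := G.max' hGne with hξdef
      have hξG : ξ ∈ G := G.max'_mem hGne
      have hξlt : ξ < xh := (Finset.mem_filter.mp hξG).2
      have hξlo : xlo S hS ≤ ξ := by
        have := (Finset.mem_filter.mp hξG).1
        rw [Finset.mem_image] at this
        obtain ⟨p, hp, hp'⟩ := this
        rw [← hp']
        exact Finset.min'_le _ _ (Finset.mem_image_of_mem _ hp)
      have hξi : ξ ∈ Set.Icc (xlo S hS) (xhi S hS) := ⟨hξlo, by linarith [hxh.2]⟩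
      have hgap : ∀ p ∈ S, ¬(ξ < p 0 ∧ p 0 < xh) := by
        intro p hp hcon
        have : p 0 ∈ G := by
          rw [hG, Finset.mem_filter]
          exact ⟨Finset.mem_image_of_mem _ hp, hcon.2⟩
        have := Finset.le_max' G _ this
        rw [← hξdef] at this
        linarith [hcon.1]
      have hcard' : ((S.image fun p : Plane => p 0).filter (fun g => g < ξ)).card ≤ n := by
        have hsub : (S.image fun p : Plane => p 0).filter (fun g => g < ξ) ⊆ G := by
          intro g hg
          rw [Finset.mem_filter] at hg
          rw [hG, Finset.mem_filter]
          exact ⟨hg.1, by linarith [hg.2]⟩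
        have hlt : ((S.image fun p : Plane => p 0).filter (fun g => g < ξ)).card < G.card := by
          apply Finset.card_lt_card
          rw [Finset.ssubset_iff_of_subset hsub]
          exact ⟨ξ, hξG, by simp⟩
        exact Nat.lt_succ_iff.mp (Nat.lt_of_lt_of_le hlt hcard)
      have hseg := cell_seg_good S hS hQi (Q := Q) hξlo hξlt hxh.2 hgap
      rcases le_or_gt (upperF S xh) (upperF S ξ) with hfle | hflt
      · -- f went up (walking left): use Φ bound, exact accounting
        have habs : |upperF S xh - upperF S ξ| = upperF S ξ - upperF S xh := by
          rw [abs_of_nonpos (by linarith)]; ring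
        rw [habs] at hseg
        have hIH := IH ξ hξi hcard'
        exact (hseg.trans hIH).mono (le_of_eq (by ring))
      · -- f decreases walking left: it is monotone on [xlo, xh], use Ψ bound
        have claim1 : ∀ u, xlo S hS ≤ u → u ≤ xh → upperF S u ≤ upperF S xh := by
          intro u h1 h2
          rcases le_or_gt u ξ with huξ | huξ
          · rcases eq_or_lt_of_le huξ with he | hult
            · rw [he]; linarith
            · by_contra hcon
              push_neg at hcon
              have h3 := concave3 S hS (x1 := u) (x2 := ξ) (x3 := xh)
                ⟨h1, by linarith [hxh.2]⟩ hxh hult hξlt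
              nlinarith
          · rcases eq_or_lt_of_le h2 with he | hult
            · rw [he]
            · set t := (u - ξ) / (xh - ξ) with ht
              have hd : (0:ℝ) < xh - ξ := by linarith
              have ht0 : 0 ≤ t := div_nonneg (by linarith) hd.le
              have ht1 : t ≤ 1 := by rw [ht, div_le_one hd]; linarith
              have hcell := upperF_cell S hS hξlo hξlt hxh.2 hgap ht0 ht1
              have hueq : (1 - t) * ξ + t * xh = u := by rw [ht]; field_simp; ring
              rw [hueq] at hcell
              rw [hcell]
              nlinarith
        have hmono : ∀ u v, xlo S hS ≤ u → u ≤ v → v ≤ xh → upperF S u ≤ upperF S v := by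
          intro u v h1 h2 h3
          rcases eq_or_lt_of_le h2 with he | hlt2
          · rw [he]
          · rcases eq_or_lt_of_le h3 with he3 | hlt3
            · rw [he3]; exact claim1 u h1 (by linarith)
            · have h4 := concave3 S hS (x1 := u) (x2 := v) (x3 := xh)
                ⟨h1, by linarith [hxh.2]⟩ hxh hlt2 hlt3
              have h5 := claim1 u h1 (by linarith)
              nlinarith
        have hM := chain_mono S hS hQi (n + 1) xh hxh hcard hmono
        apply hM.mono
        have := upperF_le_yhi S hS hxh
        linarith

end Chain

end AAGD
namespace AAGD

section Diam

variable (S : Finset Plane) {h : ℕ} {Q : Fin h → Set Plane}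

lemma exists_push (hS : S.Nonempty) {u v : Plane} (hu : u ∈ hullS S) (hv : v ∈ hullS S) :
    ∃ v', v' ∈ hullS S ∧ v' ∉ interior (hullS S) ∧ dist u v ≤ dist u v' := by
  by_cases huv : v = u
  · subst huv
    have hb := mem_hull_bounds S hS hu
    refine ⟨pt (v 0) (upperF S (v 0)), upperF_mem S hS ⟨hb.1, hb.2.1⟩,
      top_not_interior S hS le_rfl, by simpa using dist_nonneg⟩
  · have hd : (0:ℝ) < dist u v := dist_pos.mpr (fun he => huv he.symm)
    set A := {t : ℝ | 1 ≤ t ∧ u + t • (v - u) ∈ hullS S} with hA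
    have h1A : (1:ℝ) ∈ A := by
      refine ⟨le_rfl, ?_⟩
      have he : u + (1:ℝ) • (v - u) = v := by module
      rw [he]; exact hv
    have hdist_t : ∀ t : ℝ, 0 ≤ t → dist u (u + t • (v - u)) = t * dist u v := by
      intro t ht
      rw [dist_eq_norm]
      have he : u - (u + t • (v - u)) = (-t) • (v - u) := by module
      rw [he, norm_smul, Real.norm_eq_abs, abs_neg, abs_of_nonneg ht, dist_eq_norm,
        norm_sub_rev]
    have hub : ∀ t ∈ A, t ≤ diam (hullS S) / dist u v := by
      intro t ht
      obtain ⟨ht1, htm⟩ := ht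
      have hle : t * dist u v ≤ diam (hullS S) := by
        rw [← hdist_t t (by linarith)]
        exact Metric.dist_le_diam_of_mem (hull_compact S).isBounded hu htm
      rw [le_div_iff₀ hd]
      exact hle
    have hAb : BddAbove A := ⟨_, hub⟩
    have hAcl : IsClosed A := by
      have he : A = Set.Ici 1 ∩ ((fun t : ℝ => u + t • (v - u)) ⁻¹' hullS S) := by
        ext t
        simp only [hA, Set.mem_setOf_eq, Set.mem_inter_iff, Set.mem_Ici, Set.mem_preimage]
      rw [he]
      exact isClosed_Ici.inter ((hull_closed S).preimage
        (continuous_const.add (continuous_id.smul continuous_const)))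
    have hAcp : IsCompact A := by
      apply (isCompact_Icc (a := (1:ℝ)) (b := diam (hullS S) / dist u v)).of_isClosed_subset hAcl
      intro t ht
      exact ⟨ht.1, hub t ht⟩
    have hTmem : sSup A ∈ A := hAcp.sSup_mem ⟨1, h1A⟩
    set T := sSup A with hT
    have hT1 : 1 ≤ T := hTmem.1
    refine ⟨u + T • (v - u), hTmem.2, ?_, ?_⟩
    · intro hcon
      rw [mem_interior_iff_mem_nhds, Metric.mem_nhds_iff] at hcon
      obtain ⟨ε, hε, hball⟩ := hcon
      set δ := ε / (2 * dist u v) with hδ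
      have hδ0 : 0 < δ := by
        rw [hδ]
        positivity
      have hmem' : u + (T + δ) • (v - u) ∈ hullS S := by
        apply hball
        rw [Metric.mem_ball, dist_eq_norm]
        have he : u + (T + δ) • (v - u) - (u + T • (v - u)) = δ • (v - u) := by module
        rw [he, norm_smul, Real.norm_eq_abs, abs_of_pos hδ0]
        have : ‖v - u‖ = dist u v := by rw [dist_eq_norm, norm_sub_rev]
        rw [this, hδ]
        rw [div_mul_eq_mul_div]
        rw [div_lt_iff₀ (by positivity)]
        nlinarith
      have : T + δ ≤ T := le_csSup hAb ⟨by linarith, hmem'⟩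
      linarith
    · have he := hdist_t T (by linarith)
      rw [he]
      nlinarith [hd]

lemma dist_le_diam_PDom (hS : S.Nonempty) (hQi : ∀ i, Q i ⊆ interior (hullS S))
    {u v : Plane} (hu : u ∈ hullS S) (hv : v ∈ hullS S) :
    dist u v ≤ Metric.diam (PDom S Q) := by
  have hbnd : Bornology.IsBounded (PDom S Q) :=
    (hull_compact S).isBounded.subset Set.diff_subset
  obtain ⟨v', hv'm, hv'i, hv'd⟩ := exists_push S hS hu hv
  obtain ⟨u', hu'm, hu'i, hu'd⟩ := exists_push S hS hv'm hu
  have hv'P : v' ∈ PDom S Q := by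
    rw [mem_PDom]
    exact ⟨hv'm, fun i hcon => hv'i (hQi i (interior_subset hcon))⟩
  have hu'P : u' ∈ PDom S Q := by
    rw [mem_PDom]
    exact ⟨hu'm, fun i hcon => hu'i (hQi i (interior_subset hcon))⟩
  calc dist u v ≤ dist u v' := hv'd
    _ = dist v' u := dist_comm _ _
    _ ≤ dist v' u' := hu'd
    _ ≤ Metric.diam (PDom S Q) := Metric.dist_le_diam_of_mem hbnd hv'P hu'P

lemma xext_le_diam (hS : S.Nonempty) (hQi : ∀ i, Q i ⊆ interior (hullS S)) :
    xhi S hS - xlo S hS ≤ Metric.diam (PDom S Q) := by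
  obtain ⟨p, hp, hp'⟩ : ∃ p ∈ S, p 0 = xlo S hS := by
    have := (S.image fun p : Plane => p 0).min'_mem (hS.image _)
    rw [Finset.mem_image] at this; exact this
  obtain ⟨q, hq, hq'⟩ : ∃ q ∈ S, q 0 = xhi S hS := by
    have := (S.image fun p : Plane => p 0).max'_mem (hS.image _)
    rw [Finset.mem_image] at this; exact this
  have h1 : |q 0 - p 0| ≤ dist q p := coord_abs_le_dist q p 0
  have h2 : dist q p ≤ Metric.diam (PDom S Q) :=
    dist_le_diam_PDom S hS hQi (subset_convexHull ℝ _ hq) (subset_convexHull ℝ _ hp)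
  calc xhi S hS - xlo S hS = q 0 - p 0 := by rw [hp', hq']
    _ ≤ |q 0 - p 0| := le_abs_self _
    _ ≤ Metric.diam (PDom S Q) := h1.trans h2

lemma yext_le_diam (hS : S.Nonempty) (hQi : ∀ i, Q i ⊆ interior (hullS S)) :
    yhi S hS - ylo S hS ≤ Metric.diam (PDom S Q) := by
  obtain ⟨p, hp, hp'⟩ : ∃ p ∈ S, p 1 = ylo S hS := by
    have := (S.image fun p : Plane => p 1).min'_mem (hS.image _)
    rw [Finset.mem_image] at this; exact this
  obtain ⟨q, hq, hq'⟩ : ∃ q ∈ S, q 1 = yhi S hS := by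
    have := (S.image fun p : Plane => p 1).max'_mem (hS.image _)
    rw [Finset.mem_image] at this; exact this
  have h1 : |q 1 - p 1| ≤ dist q p := coord_abs_le_dist q p 1
  have h2 : dist q p ≤ Metric.diam (PDom S Q) :=
    dist_le_diam_PDom S hS hQi (subset_convexHull ℝ _ hq) (subset_convexHull ℝ _ hp)
  calc yhi S hS - ylo S hS = q 1 - p 1 := by rw [hp', hq']
    _ ≤ |q 1 - p 1| := le_abs_self _
    _ ≤ Metric.diam (PDom S Q) := h1.trans h2

end Diam

end AAGD

open AAGD in
/-- There is an absolute constant `C > 0` such that for every polygonal domain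
`P = P₀ \ ⋃ᵢ interior Pᵢ` where `P₀` is a convex polygon and the holes are pairwise disjoint
closed axis-aligned rectangles with nonempty interior contained in the interior of `P₀`,
the geodesic diameter satisfies `diam_g(P) ≤ C·diam₂(P)`. -/
theorem axis_aligned_geodesic_diameter :
    ∃ C : ℝ, 0 < C ∧
      ∀ (h : ℕ) (P₀ : Set Plane) (Q : Fin h → Set Plane)
        (a b c d : Fin h → ℝ),
        IsConvexPolygon P₀ →
        (∀ i, Q i = {p : Plane | p 0 ∈ Set.Icc (a i) (b i) ∧ p 1 ∈ Set.Icc (c i) (d i)}) →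
        (∀ i, a i < b i ∧ c i < d i) →
        Pairwise (Function.onFun Disjoint Q) →
        (∀ i, Q i ⊆ interior P₀) →
        geodDiam (P₀ \ ⋃ i, interior (Q i)) ≤
          ENNReal.ofReal (C * Metric.diam (P₀ \ ⋃ i, interior (Q i))) := by
  refine ⟨100, by norm_num, ?_⟩
  intro h P₀ Q a b c d hpoly hQ hab hdisj hQi
  obtain ⟨S, hS, rfl⟩ := hpoly
  show geodDiam (PDom S Q) ≤ ENNReal.ofReal (100 * Metric.diam (PDom S Q))
  have hQi' : ∀ i, Q i ⊆ interior (hullS S) := hQi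
  set D := Metric.diam (PDom S Q) with hD
  have hD0 : 0 ≤ D := Metric.diam_nonneg
  rw [geodDiam]
  refine iSup₂_le fun s hs => iSup₂_le fun t ht => ?_
  have hsh : s ∈ hullS S := (mem_PDom.mp hs).1
  have hth : t ∈ hullS S := (mem_PDom.mp ht).1
  obtain ⟨xs, hxs1, hxs2, hxs3, goodS⟩ := escape S hS hQ hab hdisj hQi' hs
  obtain ⟨xt, hxt1, hxt2, hxt3, goodT⟩ := escape S hS hQ hab hdisj hQi' ht
  have hbs := mem_hull_bounds S hS hsh
  have hbt := mem_hull_bounds S hS hth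
  have hxsi : xs ∈ Set.Icc (xlo S hS) (xhi S hS) := ⟨hxs1, le_trans hxs2 hbs.2.1⟩
  have hxti : xt ∈ Set.Icc (xlo S hS) (xhi S hS) := ⟨hxt1, le_trans hxt2 hbt.2.1⟩
  have chainS := chain_main S hS hQi' _ xs hxsi le_rfl
  have chainT := chain_main S hS hQi' _ xt hxti le_rfl
  have good_total := (goodS.trans chainS).trans ((goodT.trans chainT).symm)
  apply le_trans (geod_le_of_good good_total)
  apply ENNReal.ofReal_le_ofReal
  have e1 : xhi S hS - xlo S hS ≤ D := xext_le_diam S hS hQi'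
  have e2 : yhi S hS - ylo S hS ≤ D := yext_le_diam S hS hQi'
  have hxx : xlo S hS ≤ xhi S hS := le_trans hbs.1 hbs.2.1
  have flo1 : ylo S hS ≤ upperF S (xlo S hS) := ylo_le_upperF S hS ⟨le_rfl, hxx⟩
  have flo2 : upperF S (xlo S hS) ≤ yhi S hS := upperF_le_yhi S hS ⟨le_rfl, hxx⟩
  have fs2 : upperF S xs ≤ yhi S hS := upperF_le_yhi S hS hxsi
  have ft2 : upperF S xt ≤ yhi S hS := upperF_le_yhi S hS hxti
  linarith [hbs.1, hbs.2.1, hbs.2.2.1, hbs.2.2.2, hbt.1, hbt.2.1, hbt.2.2.1, hbt.2.2.2]
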